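/- Let y and x be strings over the same alphabet and let s, u, w, w', z be strings such that |s| = |u|, |z| > 0, |w'| > |w| > 0, s has a utd-match with u, s·w·z is a prefix of y, u·z·w is a prefix of x, s·w'·z is a prefix of y, and u·z·w' is a prefix of x. Set i = |s·w·z| and j = |s·w'·z|. Then the factor x[i+1..j] has a utd-match with the factor y[i+1..j]. -/
import Mathlib


/-- `UtdMatch u v t` holds when the equal-length strings `u` and `v` admit decompositions
into consecutive blocks `u = u₁⋯u_r`, `v = v₁⋯v_r` such that for every block index `s`
either `v_s = u_s`, or `u_s = z·w` and `v_s = w·z` for some nonempty strings `z, w`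
(a translocated block), and exactly `t` of the blocks are translocated. -/
inductive UtdMatch {α : Type*} : List α → List α → ℕ → Prop
  | nil : UtdMatch [] [] 0
  | same (b : List α) {u v : List α} {t : ℕ} :
      UtdMatch u v t → UtdMatch (b ++ u) (b ++ v) t
  | trans {z w : List α} (hz : z ≠ []) (hw : w ≠ []) {u v : List α} {t : ℕ} :
      UtdMatch u v t → UtdMatch (z ++ w ++ u) (w ++ z ++ v) (t + 1)

/-- `u ⊤ v`: `u` and `v` have a utd-match (of some cost). -/
def Utd {α : Type*} (u v : List α) : Prop := ∃ t, UtdMatch u v t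

/-- If `|s| = |u|`, `|z| > 0`, `|w'| > |w| > 0`, `s ⊤ u`, `s·w·z` and `s·w'·z`
are prefixes of `y`, and `u·z·w` and `u·z·w'` are prefixes of `x`, then, setting
`i = |s·w·z|` and `j = |s·w'·z|`, the factor `x[i+1..j]` has a utd-match with the factor
`y[i+1..j]`. -/
theorem conj_aux {α : Type*} : ∀ (n : ℕ) (z r t : List α), z.length = n →
    r ++ z = z ++ t → ∃ p q, r = p ++ q ∧ t = q ++ p := by
  intro n
  induction n using Nat.strong_induction_on with
  | _ n ih =>
    intro z r t hn h
    rcases eq_or_ne r [] with hr0 | hr0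
    · subst hr0
      refine ⟨[], [], rfl, ?_⟩
      simpa using (List.append_cancel_left h).symm
    by_cases hle : z.length ≤ r.length
    · have hz : z = r.take z.length := by
        have := congrArg (fun l => List.take z.length l) h
        simpa [List.take_append, Nat.sub_eq_zero_of_le hle] using this.symm
      have hr : r = z ++ r.drop z.length := by
        conv_lhs => rw [← List.take_append_drop z.length r, ← hz]
      refine ⟨z, r.drop z.length, hr, ?_⟩
      · rw [hr] at h
        have : z ++ (r.drop z.length ++ z) = z ++ t := by simpa using h
        exact (List.append_cancel_left this).symm
    · push_neg at hle
      have hrz : r = z.take r.length := by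
        have := congrArg (fun l => List.take r.length l) h.symm
        simpa [List.take_append, Nat.sub_eq_zero_of_le hle.le] using this.symm
      set z' := z.drop r.length with hz'
      have hzz : z = r ++ z' := by
        conv_lhs => rw [← List.take_append_drop r.length z, ← hrz]
      have hrpos : 0 < r.length := List.length_pos_iff.mpr hr0
      have hlen' : z'.length < n := by
        have : z'.length = z.length - r.length := by simp [hz']
        omega
      have h' : r ++ z' = z' ++ t := by
        rw [hzz] at h
        have : r ++ (r ++ z') = r ++ (z' ++ t) := by simpa using h
        exact List.append_cancel_left this
      exact ih z'.length hlen' z' r t rfl h'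

theorem utd_refl {α : Type*} (l : List α) : UtdMatch l l 0 := by
  simpa using UtdMatch.same l UtdMatch.nil

theorem utd_conj {α : Type*} {z r t : List α} (h : r ++ z = z ++ t) : Utd r t := by
  obtain ⟨p, q, hp, hq⟩ := conj_aux z.length z r t rfl h
  rcases eq_or_ne p [] with h0 | h0
  · subst h0; simp only [List.nil_append, List.append_nil] at hp hq
    exact ⟨0, hp ▸ hq ▸ utd_refl q⟩
  rcases eq_or_ne q [] with h1 | h1
  · subst h1; simp only [List.nil_append, List.append_nil] at hp hq
    exact ⟨0, hp ▸ hq ▸ utd_refl p⟩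
  · exact ⟨1, by subst hp hq; simpa using UtdMatch.trans h0 h1 UtdMatch.nil⟩

theorem redundant_translocation_attempts {α : Type*} (x y s u w w' z : List α)
    (hlen : s.length = u.length) (hz : 0 < z.length)
    (hw : 0 < w.length) (hww' : w.length < w'.length)
    (hsu : Utd s u)
    (h1 : (s ++ w ++ z) <+: y) (h2 : (u ++ z ++ w) <+: x)
    (h3 : (s ++ w' ++ z) <+: y) (h4 : (u ++ z ++ w') <+: x) :
    Utd ((x.take (s ++ w' ++ z).length).drop (s ++ w ++ z).length)
        ((y.take (s ++ w' ++ z).length).drop (s ++ w ++ z).length) := by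
  -- w is a prefix of w'
  have hpre : (u ++ z ++ w) <+: (u ++ z ++ w') := by
    apply List.prefix_of_prefix_length_le h2 h4
    simp; omega
  have hww : w <+: w' := by
    have := (List.prefix_append_right_inj (u ++ z)).mp hpre
    exact this
  obtain ⟨r, hr⟩ := hww
  -- z is a prefix of r ++ z
  have hpre2 : (s ++ w ++ z) <+: (s ++ w' ++ z) := by
    apply List.prefix_of_prefix_length_le h1 h3
    simp; omega
  have hzrz : z <+: r ++ z := by
    rw [List.append_assoc, List.append_assoc, ← hr] at hpre2
    have := (List.prefix_append_right_inj s).mp hpre2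
    rw [List.append_assoc] at this
    exact (List.prefix_append_right_inj w).mp this
  obtain ⟨t, ht⟩ := hzrz
  -- compute the takes
  have hxt : x.take (s ++ w' ++ z).length = u ++ z ++ w' := by
    have hj : (s ++ w' ++ z).length = (u ++ z ++ w').length := by simp [hlen]; omega
    rw [hj, ← List.prefix_iff_eq_take.mp h4]
  have hyt : y.take (s ++ w' ++ z).length = s ++ w' ++ z :=
    (List.prefix_iff_eq_take.mp h3).symm
  rw [hxt, hyt]
  -- compute the drops
  have hi : (s ++ w ++ z).length = s.length + w.length + z.length := by simp; omega
  have hxd : (u ++ z ++ w').drop (s ++ w ++ z).length = r := by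
    rw [← hr, hi, hlen]
    rw [show u ++ z ++ (w ++ r) = (u ++ z ++ w) ++ r by simp]
    rw [show u.length + w.length + z.length = (u ++ z ++ w).length by simp; omega]
    simp
  have hyd : (s ++ w' ++ z).drop (s ++ w ++ z).length = t := by
    rw [← hr, hi]
    rw [show s ++ (w ++ r) ++ z = (s ++ w) ++ (r ++ z) by simp]
    rw [← ht]
    rw [show s ++ w ++ (z ++ t) = (s ++ w ++ z) ++ t by simp]
    rw [show s.length + w.length + z.length = (s ++ w ++ z).length by simp; omega]
    simp
  rw [hxd, hyd]
  exact utd_conj ht.symm
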